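/- For any integer n, the splitting field of f_n(X) = X^3 - nX^2 - (n+3)X - 1 over ℚ is a cyclic cubic extension of ℚ, i.e., Galois of degree 3 with cyclic Galois group. -/

import Mathlib

open Polynomial

theorem shanks_cubic_splittingField_cyclic_cubic (n : ℤ)
    (f : ℚ[X]) (hf : f = X ^ 3 - C (n : ℚ) * X ^ 2 - C ((n : ℚ) + 3) * X - C 1) :
    IsGalois ℚ f.SplittingField ∧ Module.finrank ℚ f.SplittingField = 3 ∧ IsCyclic f.Gal := by
  subst hf
  set f : ℚ[X] := X ^ 3 - C (n : ℚ) * X ^ 2 - C ((n : ℚ) + 3) * X - C 1 with hf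
  have hmonic : f.Monic := by rw [hf]; monicity!
  have hdeg : f.natDegree = 3 := by rw [hf]; compute_degree!
  have hfne : f ≠ 0 := hmonic.ne_zero
  -- irreducibility via rational root theorem
  have hirr : Irreducible f := by
    rw [irreducible_iff_roots_eq_zero_of_degree_le_three (by omega) (by omega)]
    rw [Multiset.eq_zero_iff_forall_notMem]
    intro x hx
    rw [mem_roots hfne] at hx
    have hx' : x ^ 3 - (n : ℚ) * x ^ 2 - ((n : ℚ) + 3) * x - 1 = 0 := by
      have := hx; rw [hf] at this; simpa [IsRoot, eval_sub, eval_mul, eval_pow] using this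
    set g : ℤ[X] := X ^ 3 - C n * X ^ 2 - C (n + 3) * X - C 1 with hg
    have hgmonic : g.Monic := by rw [hg]; monicity!
    have hroot : aeval x g = 0 := by
      rw [hg]
      simp only [map_sub, map_mul, map_pow, aeval_X, aeval_C]
      simp only [algebraMap_int_eq, eq_intCast]
      push_cast
      linear_combination hx'
    obtain ⟨m, rfl, hmdvd⟩ := exists_integer_of_is_root_of_monic hgmonic hroot
    have hc0 : g.coeff 0 = -1 := by rw [hg]; simp [coeff_sub, coeff_C]
    rw [hc0] at hmdvd
    have hm : m = 1 ∨ m = -1 := by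
      have := Int.isUnit_iff.mp (isUnit_of_dvd_unit hmdvd (by norm_num : IsUnit (-1 : ℤ)))
      tauto
    have hZ : m ^ 3 - n * m ^ 2 - (n + 3) * m - 1 = 0 := by
      simp only [algebraMap_int_eq, eq_intCast] at hx'; exact_mod_cast hx'
    rcases hm with rfl | rfl <;> omega
  obtain ⟨r, hr⟩ := Splits.exists_eval_eq_zero (SplittingField.splits f)
    (by rw [degree_map, degree_eq_natDegree hfne, hdeg]; norm_num)
  rw [eval_map] at hr
  have hroot_r : aeval r f = 0 := by rwa [aeval_def]
  set N : f.SplittingField := algebraMap ℚ f.SplittingField (n : ℚ) with hN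
  clear_value N
  have hrval : r ^ 3 - N * r ^ 2 - (N + 3) * r - 1 = 0 := by
    have this : aeval r (X ^ 3 - C (n : ℚ) * X ^ 2 - C ((n : ℚ) + 3) * X - C 1) = 0 := hroot_r
    simp only [map_sub, map_mul, map_pow, aeval_X, aeval_C, map_add, map_one, map_ofNat] at this
    rw [← hN] at this
    linear_combination this
  have h0 : r ≠ 0 := by
    rintro rfl; simp at hrval
  have h1 : (1 : f.SplittingField) + r ≠ 0 := by
    intro h
    have hr1 : r = -1 := by linear_combination h
    rw [hr1] at hrval
    exact one_ne_zero (by linear_combination hrval : (1 : f.SplittingField) = 0)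
  set b : f.SplittingField := -(1 + r)⁻¹ with hb
  set c : f.SplittingField := -(1 + r) / r with hc
  clear_value b c
  have hS3 : r * (b * c) = 1 := by
    rw [hb, hc]; field_simp
  have hS1 : r + b + c = N := by
    rw [hb, hc]; field_simp; linear_combination hrval
  have hS2 : r * b + r * c + b * c = -(N + 3) := by
    rw [hb, hc]; field_simp; linear_combination -hrval
  have key : ∀ x : f.SplittingField,
      x ^ 3 - N * x ^ 2 - (N + 3) * x - 1 = (x - r) * ((x - b) * (x - c)) := by
    intro x
    linear_combination (x ^ 2) * hS1 - x * hS2 + hS3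
  have htop : IntermediateField.adjoin ℚ ({r} : Set f.SplittingField) = ⊤ := by
    refine top_le_iff.mp ?_
    intro x _
    have hx : x ∈ Algebra.adjoin ℚ (f.rootSet f.SplittingField) := by
      rw [show Algebra.adjoin ℚ (f.rootSet f.SplittingField) = ⊤ from SplittingField.adjoin_rootSet _]; exact Algebra.mem_top
    have hle : Algebra.adjoin ℚ (f.rootSet f.SplittingField) ≤
        (IntermediateField.adjoin ℚ ({r} : Set f.SplittingField)).toSubalgebra := by
      apply Algebra.adjoin_le
      intro y hy
      rw [mem_rootSet] at hy
      have hy3 : y ^ 3 - N * y ^ 2 - (N + 3) * y - 1 = 0 := by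
        have this : aeval y (X ^ 3 - C (n : ℚ) * X ^ 2 - C ((n : ℚ) + 3) * X - C 1) = 0 := hy.2
        simp only [map_sub, map_mul, map_pow, aeval_X, aeval_C, map_add, map_one, map_ofNat] at this
        rw [← hN] at this
        linear_combination this
      rw [key y] at hy3
      have hrmem : r ∈ IntermediateField.adjoin ℚ ({r} : Set f.SplittingField) :=
        IntermediateField.mem_adjoin_simple_self ℚ r
      have hbmem : b ∈ IntermediateField.adjoin ℚ ({r} : Set f.SplittingField) := by
        rw [hb]; exact neg_mem (inv_mem (add_mem (one_mem _) hrmem))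
      have hcmem : c ∈ IntermediateField.adjoin ℚ ({r} : Set f.SplittingField) := by
        rw [hc]; exact div_mem (neg_mem (add_mem (one_mem _) hrmem)) hrmem
      rcases mul_eq_zero.mp hy3 with h | h
      · rw [sub_eq_zero] at h; rw [h]; exact hrmem
      rcases mul_eq_zero.mp h with h | h
      · rw [sub_eq_zero] at h; rw [h]; exact hbmem
      · rw [sub_eq_zero] at h; rw [h]; exact hcmem
    exact hle hx
  have hint : IsIntegral ℚ r := ⟨f, hmonic, hr⟩
  have hmin : minpoly ℚ r = f := (minpoly.eq_of_irreducible_of_monic hirr hroot_r hmonic).symm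
  have h3 : Module.finrank ℚ f.SplittingField = 3 := by
    rw [← IntermediateField.finrank_top', ← htop, IntermediateField.adjoin.finrank hint, hmin, hdeg]
  have hgal : IsGalois ℚ f.SplittingField := @IsGalois.mk _ _ _ _ _ inferInstance (SplittingField.instNormal f)
  have : Fact (Nat.Prime 3) := ⟨by norm_num⟩
  have hcard : Nat.card f.Gal = 3 := by
    have h : Nat.card (f.SplittingField ≃ₐ[ℚ] f.SplittingField) = 3 := by
      rw [IsGalois.card_aut_eq_finrank]; exact h3
    exact h
  exact ⟨hgal, h3, isCyclic_of_prime_card hcard⟩
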